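/- Let K be a nonempty finite set (the parties) and for each k ∈ K let d_k ≥ 1, let A_k (outcomes) and X_k (settings) be nonempty finite sets. For each k ∈ K, x ∈ X_k, a ∈ A_k let M_{k,a}^x be a positive semidefinite d_k×d_k complex matrix, and set M_{k,✓}^x := Σ_{a∈A_k} M_{k,a}^x. Assume strong fair sampling: there exist reals e_k(x) with 0 < e_k(x) ≤ 1 such that M_{k,✓}^x = e_k(x) • 𝟙 for all k ∈ K and x ∈ X_k. Let Ψ be a density matrix on the tensor-product space indexed by Π_{k∈K} Fin(d_k). Then: (a) Σ_{a∈A_k} e_k(x)⁻¹ • M_{k,a}^x = 𝟙 for every k and x; and (b) for every tuple of settings x̄ ∈ Π_k X_k and outcomes ā ∈ Π_k A_k, Tr((⊗_{k∈K} M_{k,ā(k)}^{x̄(k)}) Ψ) / Tr((⊗_{k∈K} M_{k,✓}^{x̄(k)}) Ψ) = Tr((⊗_{k∈K} e_k(x̄(k))⁻¹ • M_{k,ā(k)}^{x̄(k)}) Ψ). That is, under strong fair sampling the post-selected statistics equal the statistics obtained by measuring the actual state Ψ with lossless devices. -/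
import Mathlib


open scoped ComplexOrder

/-- The tensor product `⊗_{k∈K} A_k`, indexed by tuples in `Π_{k∈K} Fin (d k)`. -/
noncomputable def tensorProd {K : Type*} [Fintype K] {d : K → ℕ}
    (A : ∀ k, Matrix (Fin (d k)) (Fin (d k)) ℂ) :
    Matrix (∀ k, Fin (d k)) (∀ k, Fin (d k)) ℂ :=
  fun f g => ∏ k, A k (f k) (g k)

/-- Under strong fair sampling (`M_{k,✓}^x = e_k(x) • 𝟙` with `0 < e_k(x) ≤ 1`),
the rescaled POVMs `e_k(x)⁻¹ • M_{k,a}^x` are lossless, and the post-selected statistics of the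
lossy devices on the actual state `Ψ` equal the statistics of these lossless devices on `Ψ`. -/
theorem strong_fair_sampling_postselected_eq_actual
    (K : Type*) [Fintype K] [DecidableEq K] [Nonempty K]
    (d : K → ℕ) (hd : ∀ k, 1 ≤ d k)
    (A X : K → Type*) [∀ k, Fintype (A k)] [∀ k, Nonempty (A k)]
    [∀ k, Fintype (X k)] [∀ k, Nonempty (X k)]
    (M : ∀ k, X k → A k → Matrix (Fin (d k)) (Fin (d k)) ℂ)
    (hMpsd : ∀ k x a, (M k x a).PosSemidef)
    (e : ∀ k, X k → ℝ) (he0 : ∀ k x, 0 < e k x) (he1 : ∀ k x, e k x ≤ 1)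
    (hfac : ∀ k x, ∑ a, M k x a = (e k x : ℂ) • (1 : Matrix (Fin (d k)) (Fin (d k)) ℂ))
    (Ψ : Matrix (∀ k, Fin (d k)) (∀ k, Fin (d k)) ℂ)
    (hΨ : Ψ.PosSemidef) (hΨtr : Ψ.trace = 1) :
    (∀ k x, ∑ a, (e k x : ℂ)⁻¹ • M k x a = (1 : Matrix (Fin (d k)) (Fin (d k)) ℂ)) ∧
    ∀ (xb : ∀ k, X k) (ab : ∀ k, A k),
      Matrix.trace (tensorProd (fun k => M k (xb k) (ab k)) * Ψ) /
          Matrix.trace (tensorProd (fun k => ∑ a, M k (xb k) a) * Ψ) =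
        Matrix.trace (tensorProd (fun k => (e k (xb k) : ℂ)⁻¹ • M k (xb k) (ab k)) * Ψ) := by
  have hene : ∀ k x, (e k x : ℂ) ≠ 0 := fun k x => by
    exact_mod_cast (he0 k x).ne'
  have hone : ∀ (f : ∀ k, Fin (d k)) g,
      tensorProd (K := K) (d := d) (fun _ => 1) f g = (1 : Matrix (∀ k, Fin (d k)) _ ℂ) f g := by
    intro f g
    by_cases h : f = g
    · subst h; simp [tensorProd, Matrix.one_apply]
    · obtain ⟨k, hk⟩ := Function.ne_iff.mp h
      rw [Matrix.one_apply_ne h]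
      exact Finset.prod_eq_zero (Finset.mem_univ k) (Matrix.one_apply_ne hk)
  have hsmul : ∀ (c : K → ℂ) (B : ∀ k, Matrix (Fin (d k)) (Fin (d k)) ℂ),
      tensorProd (fun k => c k • B k) = (∏ k, c k) • tensorProd B := by
    intro c B
    funext f g
    simp [tensorProd, Matrix.smul_apply, smul_eq_mul, Finset.prod_mul_distrib]
  constructor
  · intro k x
    rw [← Finset.smul_sum, hfac, smul_smul, inv_mul_cancel₀ (hene k x), one_smul]
  · intro xb ab
    have hden : tensorProd (fun k => ∑ a, M k (xb k) a) =
        (∏ k, (e k (xb k) : ℂ)) • (1 : Matrix (∀ k, Fin (d k)) _ ℂ) := by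
      have h1 : (fun k => ∑ a, M k (xb k) a)
          = fun k => (e k (xb k) : ℂ) • (1 : Matrix (Fin (d k)) (Fin (d k)) ℂ) :=
        funext fun k => hfac k (xb k)
      rw [h1, hsmul]
      congr 1
      funext f g
      exact hone f g
    have hp : (∏ k, (e k (xb k) : ℂ)) ≠ 0 :=
      Finset.prod_ne_zero_iff.mpr fun k _ => hene k (xb k)
    rw [hden, hsmul, Matrix.smul_mul, Matrix.trace_smul, Matrix.smul_mul, Matrix.trace_smul,
      Matrix.one_mul, hΨtr, smul_eq_mul, smul_eq_mul, mul_one, Finset.prod_inv_distrib,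
      div_eq_inv_mul]
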